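/- Let λ > 0 and let u be a C^3 function on [0,L] satisfying λu + D^3u = 0 on (0,L) with u(0) = u(L) = Du(L) = 0. Then u is identically zero on [0,L]. -/

import Mathlib

noncomputable def D (L : ℝ) (u : ℝ → ℝ) (i : ℕ) (x : ℝ) : ℝ :=
  iteratedDerivWithin i u (Set.Icc 0 L) x

theorem stmt_9 (L : ℝ) (hL : 0 < L) (lam : ℝ) (hlam : 0 < lam)
    (u : ℝ → ℝ) (hu : ContDiffOn ℝ 3 u (Set.Icc 0 L))
    (heq : ∀ x ∈ Set.Ioo (0:ℝ) L, lam * u x + D L u 3 x = 0)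
    (h0 : u 0 = 0) (hLv : u L = 0) (h1L : D L u 1 L = 0) :
    ∀ x ∈ Set.Icc (0:ℝ) L, u x = 0 := by
  set s : Set ℝ := Set.Icc 0 L with hs_def
  have hs : UniqueDiffOn ℝ s := uniqueDiffOn_Icc hL
  set u1 := iteratedDerivWithin 1 u s with hu1_def
  set u2 := iteratedDerivWithin 2 u s with hu2_def
  set u3 := iteratedDerivWithin 3 u s with hu3_def
  have hd : ∀ n : ℕ, n < 3 → ∀ x ∈ s,
      HasDerivWithinAt (iteratedDerivWithin n u s) (iteratedDerivWithin (n+1) u s x) s x := by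
    intro n hn x hx
    have h1 : DifferentiableOn ℝ (iteratedDerivWithin n u s) s :=
      hu.differentiableOn_iteratedDerivWithin (by exact_mod_cast hn) hs
    have h2 := (h1 x hx).hasDerivWithinAt
    rwa [← iteratedDerivWithin_succ] at h2
  have hdu : ∀ x ∈ s, HasDerivWithinAt u (u1 x) s x := by
    intro x hx
    have := hd 0 (by norm_num) x hx
    rwa [iteratedDerivWithin_zero] at this
  have hdu1 : ∀ x ∈ s, HasDerivWithinAt u1 (u2 x) s x := fun x hx => hd 1 (by norm_num) x hx
  have hdu2 : ∀ x ∈ s, HasDerivWithinAt u2 (u3 x) s x := fun x hx => hd 2 (by norm_num) x hx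
  set F : ℝ → ℝ := fun x => u x * u2 x - u1 x * u1 x / 2 with hF_def
  have hF : ∀ x ∈ s, HasDerivWithinAt F (u x * u3 x) s x := by
    intro x hx
    have h1 := ((hdu x hx).mul (hdu2 x hx)).sub
      ((((hdu1 x hx).mul (hdu1 x hx))).div_const 2)
    exact h1.congr_deriv (by ring)
  have hu3eq : ∀ x ∈ Set.Ioo (0:ℝ) L, u3 x = -(lam * u x) := by
    intro x hx
    have := heq x hx
    simp only [D] at this
    linarith
  have hFderiv : ∀ x ∈ Set.Ioo (0:ℝ) L, HasDerivAt F (u x * u3 x) x := by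
    intro x hx
    exact (hF x (Set.Ioo_subset_Icc_self hx)).hasDerivAt (Icc_mem_nhds hx.1 hx.2)
  have hFcont : ContinuousOn F s := fun x hx => (hF x hx).continuousWithinAt
  have hint : interior s = Set.Ioo 0 L := interior_Icc
  have hA : AntitoneOn F s := by
    apply antitoneOn_of_deriv_nonpos (convex_Icc 0 L) hFcont
    · intro x hx
      rw [hint] at hx
      exact (hFderiv x hx).differentiableAt.differentiableWithinAt
    · intro x hx
      rw [hint] at hx
      rw [(hFderiv x hx).deriv, hu3eq x hx]
      nlinarith [sq_nonneg (u x)]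
  have h0s : (0:ℝ) ∈ s := Set.left_mem_Icc.2 hL.le
  have hLs : L ∈ s := Set.right_mem_Icc.2 hL.le
  have hFL : F L = 0 := by
    simp only [hF_def, hLv]
    have h1 : u1 L = 0 := h1L
    rw [h1]; ring
  have hF0 : F 0 ≤ 0 := by
    simp only [hF_def, h0]
    nlinarith [sq_nonneg (u1 0)]
  have hFzero : ∀ x ∈ s, F x = 0 := by
    intro x hx
    have h1 : F x ≤ F 0 := hA h0s hx hx.1
    have h2 : F L ≤ F x := hA hx hLs hx.2
    linarith [hFL ▸ h2]
  have hmid : ∀ x ∈ Set.Ioo (0:ℝ) L, u x = 0 := by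
    intro x hx
    have hmem : s ∈ nhds x := Icc_mem_nhds hx.1 hx.2
    have hev : F =ᶠ[nhds x] fun _ => (0:ℝ) :=
      Filter.eventually_of_mem hmem hFzero
    have hconst : HasDerivAt F 0 x :=
      (hasDerivAt_const x (0:ℝ)).congr_of_eventuallyEq hev
    have huniq : u x * u3 x = 0 := (hFderiv x hx).unique hconst
    rw [hu3eq x hx] at huniq
    have h2 : lam * u x ^ 2 = 0 := by nlinarith [huniq]
    have h3 : u x ^ 2 = 0 := by
      rcases mul_eq_zero.mp h2 with h | h
      · exact absurd h hlam.ne'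
      · exact h
    exact pow_eq_zero_iff two_ne_zero |>.mp h3
  intro x hx
  rcases eq_or_lt_of_le hx.1 with h | h
  · rw [← h]; exact h0
  rcases eq_or_lt_of_le hx.2 with h' | h'
  · rw [h']; exact hLv
  exact hmid x ⟨h, h'⟩
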